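/- (Guaranteed Brier improvement from a large disagreement event.) Let f₁, f₂ : 𝒳 → [0,1]^d be predictors, ℓ a linear loss with vectors ℓ_a ∈ [0,1]^d, α > 0, η > 0, and let E = E^α_{ℓ,a₁,a₂}(f₁, f₂) be the disagreement event with μ(E) ≥ η, i.e. the set of x such that π_ℓ^BR(f₁(x)) = a₁ ≠ a₂ = π_ℓ^BR(f₂(x)) and either ⟨f₁(x), ℓ_{a₂} − ℓ_{a₁}⟩ > α or ⟨f₂(x), ℓ_{a₁} − ℓ_{a₂}⟩ > α. Then there exists i ∈ {1,2} such that, setting φ = E_{(x,y)∼𝒟}[y − f_i(x) | E] and f_i'(x) = proj_{[0,1]^d}(f_i(x) + φ·1_E(x)), the Brier score decreases by B(f_i, 𝒟) − B(f_i', 𝒟) ≥ α²η / (4d). -/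

import Mathlib

open MeasureTheory
open scoped RealInnerProductSpace
/-- The Euclidean projection onto the cube `[0,1]^d` (coordinatewise clamping). -/
noncomputable def projCube {d : ℕ} (v : EuclideanSpace ℝ (Fin d)) :
    EuclideanSpace ℝ (Fin d) :=
  WithLp.toLp 2 (fun j => min 1 (max 0 (v j)))

lemma clamp_abs_le (v y : ℝ) (hy : y ∈ Set.Icc (0:ℝ) 1) :
    |min 1 (max 0 v) - y| ≤ |v - y| := by
  obtain ⟨h0, h1⟩ := hy
  rcases le_or_gt v 0 with h | h
  · rcases le_or_gt v 1 with h' | h'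
    · simp only [max_eq_left h, min_eq_right (by linarith : (0:ℝ) ≤ 1)]
      rw [abs_of_nonpos (by linarith), abs_of_nonpos (by linarith)]; linarith
    · linarith
  · rcases le_or_gt v 1 with h' | h'
    · rw [max_eq_right h.le, min_eq_right h']
    · rw [max_eq_right (by linarith : (0:ℝ) ≤ v), min_eq_left h'.le,
        abs_of_nonneg (by linarith), abs_of_nonneg (by linarith)]; linarith

lemma euc_norm_le {d : ℕ} (x y : EuclideanSpace ℝ (Fin d))
    (h : ∀ j, |x j| ≤ |y j|) : ‖x‖ ≤ ‖y‖ := by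
  rw [EuclideanSpace.norm_eq, EuclideanSpace.norm_eq]
  apply Real.sqrt_le_sqrt
  apply Finset.sum_le_sum
  intro j _
  simp only [Real.norm_eq_abs]
  exact pow_le_pow_left₀ (abs_nonneg _) (h j) 2

lemma projCube_norm_le {d : ℕ} (u y : EuclideanSpace ℝ (Fin d))
    (hy : ∀ j, y j ∈ Set.Icc (0:ℝ) 1) : ‖projCube u - y‖ ≤ ‖u - y‖ := by
  apply euc_norm_le
  intro j
  have h1 : (projCube u - y) j = min 1 (max 0 (u j)) - y j := by simp [projCube]
  have h2 : (u - y) j = u j - y j := by simp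
  rw [h1, h2]
  exact clamp_abs_le _ _ (hy j)

lemma projCube_mem {d : ℕ} (u : EuclideanSpace ℝ (Fin d)) (j : Fin d) :
    projCube u j ∈ Set.Icc (0:ℝ) 1 := by
  constructor
  · exact le_min (by norm_num) (le_max_left 0 _)
  · exact min_le_left _ _

lemma euc_norm_le_sqrt {d : ℕ} (x : EuclideanSpace ℝ (Fin d))
    (h : ∀ j, |x j| ≤ 1) : ‖x‖ ≤ Real.sqrt d := by
  rw [EuclideanSpace.norm_eq]
  apply Real.sqrt_le_sqrt
  calc ∑ i, ‖x i‖ ^ 2 ≤ ∑ _i : Fin d, (1:ℝ) := by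
        apply Finset.sum_le_sum
        intro j _
        simp only [Real.norm_eq_abs]
        calc |x j|^2 ≤ 1^2 := pow_le_pow_left₀ (abs_nonneg _) (h j) 2
        _ = 1 := one_pow 2
    _ = d := by simp

lemma euc_sub_norm_le_sqrt {d : ℕ} (x y : EuclideanSpace ℝ (Fin d))
    (hx : ∀ j, x j ∈ Set.Icc (0:ℝ) 1) (hy : ∀ j, y j ∈ Set.Icc (0:ℝ) 1) :
    ‖x - y‖ ≤ Real.sqrt d := by
  apply euc_norm_le_sqrt
  intro j
  have h2 : (x - y) j = x j - y j := by simp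
  rw [h2, abs_le]
  obtain ⟨a1, a2⟩ := hx j; obtain ⟨b1, b2⟩ := hy j
  constructor <;> linarith

lemma sq_norm_le {d : ℕ} (x y : EuclideanSpace ℝ (Fin d))
    (hx : ∀ j, x j ∈ Set.Icc (0:ℝ) 1) (hy : ∀ j, y j ∈ Set.Icc (0:ℝ) 1) :
    ‖x - y‖ ^ 2 ≤ (d : ℝ) := by
  calc ‖x - y‖^2 ≤ Real.sqrt d ^ 2 :=
        pow_le_pow_left₀ (norm_nonneg _) (euc_sub_norm_le_sqrt x y hx hy) 2
    _ = d := Real.sq_sqrt (Nat.cast_nonneg d)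

lemma brier_improve {X : Type*} [MeasurableSpace X] {d : ℕ}
    (𝒟 : Measure (X × EuclideanSpace ℝ (Fin d))) [IsProbabilityMeasure 𝒟]
    (hY : ∀ᵐ p ∂𝒟, ∀ j, p.2 j ∈ Set.Icc (0 : ℝ) 1)
    (f : X → EuclideanSpace ℝ (Fin d)) (hf_meas : Measurable f)
    (hf_range : ∀ x j, f x j ∈ Set.Icc (0 : ℝ) 1)
    (E : Set X) (hEm : MeasurableSet E)
    (hpos : 0 < (𝒟 (Prod.fst ⁻¹' E)).toReal)
    (v : EuclideanSpace ℝ (Fin d))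
    (hv : v = ∫ p in Prod.fst ⁻¹' E, (p.2 - f p.1) ∂𝒟)
    (φ : EuclideanSpace ℝ (Fin d))
    (hφ : φ = (𝒟 (Prod.fst ⁻¹' E)).toReal⁻¹ • v)
    (f' : X → EuclideanSpace ℝ (Fin d))
    (hf' : ∀ x, f' x = projCube (f x + Set.indicator E (fun _ => φ) x)) :
    (∫ p, ‖f p.1 - p.2‖ ^ 2 ∂𝒟) - (∫ p, ‖f' p.1 - p.2‖ ^ 2 ∂𝒟)
      ≥ ‖v‖ ^ 2 / (𝒟 (Prod.fst ⁻¹' E)).toReal := by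
  set S : Set (X × EuclideanSpace ℝ (Fin d)) := Prod.fst ⁻¹' E with hS
  have hSm : MeasurableSet S := measurable_fst hEm
  set m : ℝ := (𝒟 S).toReal with hm
  -- the indicator function
  set I : X × EuclideanSpace ℝ (Fin d) → EuclideanSpace ℝ (Fin d) :=
    fun p => Set.indicator E (fun _ => φ) p.1 with hI
  have hI_meas : Measurable I := (measurable_const.indicator hEm).comp measurable_fst
  have hI_bd : ∀ p, ‖I p‖ ≤ ‖φ‖ := by
    intro p
    by_cases hp : p.1 ∈ E
    · simp [hI, Set.indicator_of_mem hp]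
    · simp [hI, Set.indicator_of_notMem hp, norm_nonneg]
  -- g = residual
  set g : X × EuclideanSpace ℝ (Fin d) → EuclideanSpace ℝ (Fin d) :=
    fun p => p.2 - f p.1 with hg
  have hg_meas : Measurable g := measurable_snd.sub (hf_meas.comp measurable_fst)
  have hg_bd : ∀ᵐ p ∂𝒟, ‖g p‖ ≤ Real.sqrt d := by
    filter_upwards [hY] with p hp
    exact euc_sub_norm_le_sqrt _ _ hp (hf_range p.1)
  have hg_int : Integrable g 𝒟 :=
    Integrable.mono' (integrable_const _) hg_meas.aestronglyMeasurable hg_bd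
  have hg_intS : IntegrableOn g S 𝒟 := hg_int.integrableOn
  -- A integrable
  have hA_meas : Measurable (fun p : X × EuclideanSpace ℝ (Fin d) => ‖f p.1 - p.2‖ ^ 2) :=
    ((hf_meas.comp measurable_fst).sub measurable_snd).norm.pow_const 2
  have hA_int : Integrable (fun p : X × EuclideanSpace ℝ (Fin d) => ‖f p.1 - p.2‖ ^ 2) 𝒟 := by
    apply Integrable.mono' (integrable_const (d : ℝ)) hA_meas.aestronglyMeasurable
    filter_upwards [hY] with p hp
    rw [Real.norm_eq_abs, abs_of_nonneg (by positivity)]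
    exact sq_norm_le _ _ (hf_range p.1) hp
  -- f' measurable and in cube
  have hf'_eq : f' = fun x => projCube (f x + Set.indicator E (fun _ => φ) x) := funext hf'
  have hproj_meas : Measurable (projCube (d := d)) := by
    unfold projCube
    exact (WithLp.measurable_toLp 2 _).comp (measurable_pi_lambda _ fun j =>
      (measurable_const.min (measurable_const.max
        ((measurable_pi_apply j).comp (WithLp.measurable_ofLp 2 _))) : _))
  have hf'_meas : Measurable f' := by
    rw [hf'_eq]
    exact hproj_meas.comp (hf_meas.add (measurable_const.indicator hEm))
  have hf'_range : ∀ x j, f' x j ∈ Set.Icc (0:ℝ) 1 := by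
    intro x j; rw [hf' x]; exact projCube_mem _ j
  have hB_meas : Measurable (fun p : X × EuclideanSpace ℝ (Fin d) => ‖f' p.1 - p.2‖ ^ 2) :=
    ((hf'_meas.comp measurable_fst).sub measurable_snd).norm.pow_const 2
  have hB_int : Integrable (fun p : X × EuclideanSpace ℝ (Fin d) => ‖f' p.1 - p.2‖ ^ 2) 𝒟 := by
    apply Integrable.mono' (integrable_const (d : ℝ)) hB_meas.aestronglyMeasurable
    filter_upwards [hY] with p hp
    rw [Real.norm_eq_abs, abs_of_nonneg (by positivity)]
    exact sq_norm_le _ _ (hf'_range p.1) hp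
  -- D : the correction term
  set D : X × EuclideanSpace ℝ (Fin d) → ℝ :=
    fun p => 2 * ⟪f p.1 - p.2, I p⟫ + ‖I p‖ ^ 2 with hD
  have hinner_meas : Measurable (fun p : X × EuclideanSpace ℝ (Fin d) => ⟪f p.1 - p.2, I p⟫) :=
    ((hf_meas.comp measurable_fst).sub measurable_snd).inner hI_meas
  have hinner_int : Integrable (fun p : X × EuclideanSpace ℝ (Fin d) => ⟪f p.1 - p.2, I p⟫) 𝒟 := by
    apply Integrable.mono' (integrable_const (Real.sqrt d * ‖φ‖)) hinner_meas.aestronglyMeasurable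
    filter_upwards [hY] with p hp
    rw [Real.norm_eq_abs]
    calc |⟪f p.1 - p.2, I p⟫| ≤ ‖f p.1 - p.2‖ * ‖I p‖ := abs_real_inner_le_norm _ _
      _ ≤ Real.sqrt d * ‖φ‖ := by
          apply mul_le_mul (euc_sub_norm_le_sqrt _ _ (hf_range p.1) hp) (hI_bd p)
            (norm_nonneg _) (Real.sqrt_nonneg _)
  have hIsq_meas : Measurable (fun p : X × EuclideanSpace ℝ (Fin d) => ‖I p‖ ^ 2) :=
    hI_meas.norm.pow_const 2
  have hIsq_int : Integrable (fun p : X × EuclideanSpace ℝ (Fin d) => ‖I p‖ ^ 2) 𝒟 := by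
    apply Integrable.mono' (integrable_const (‖φ‖ ^ 2)) hIsq_meas.aestronglyMeasurable
    filter_upwards with p
    rw [Real.norm_eq_abs, abs_of_nonneg (by positivity)]
    exact pow_le_pow_left₀ (norm_nonneg _) (hI_bd p) 2
  have hD_int : Integrable D 𝒟 := ((hinner_int.const_mul 2).add hIsq_int)
  -- pointwise: B ≤ A + D a.e.
  have hBC : ∀ᵐ p ∂𝒟, ‖f' p.1 - p.2‖ ^ 2 ≤ ‖f p.1 - p.2‖ ^ 2 + D p := by
    filter_upwards [hY] with p hp
    have h1 : ‖f' p.1 - p.2‖ ≤ ‖(f p.1 + I p) - p.2‖ := by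
      rw [hf' p.1]
      exact projCube_norm_le _ _ hp
    have h2 : (f p.1 + I p) - p.2 = (f p.1 - p.2) + I p := by abel
    calc ‖f' p.1 - p.2‖ ^ 2 ≤ ‖(f p.1 + I p) - p.2‖ ^ 2 :=
          pow_le_pow_left₀ (norm_nonneg _) h1 2
      _ = ‖(f p.1 - p.2) + I p‖ ^ 2 := by rw [h2]
      _ = ‖f p.1 - p.2‖ ^ 2 + D p := by
          rw [norm_add_sq_real]; simp [hD]; ring
  -- ∫ B ≤ ∫ A + ∫ D
  have hIB : (∫ p, ‖f' p.1 - p.2‖ ^ 2 ∂𝒟) ≤ (∫ p, ‖f p.1 - p.2‖ ^ 2 ∂𝒟) + ∫ p, D p ∂𝒟 := by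
    calc (∫ p, ‖f' p.1 - p.2‖ ^ 2 ∂𝒟) ≤ ∫ p, (‖f p.1 - p.2‖ ^ 2 + D p) ∂𝒟 :=
          integral_mono_ae hB_int (hA_int.add hD_int) hBC
      _ = (∫ p, ‖f p.1 - p.2‖ ^ 2 ∂𝒟) + ∫ p, D p ∂𝒟 := integral_add hA_int hD_int
  -- compute ∫ D
  have hDint_eq : ∫ p, D p ∂𝒟 = -(‖v‖ ^ 2 / m) := by
    have e1 : (fun p : X × EuclideanSpace ℝ (Fin d) => ⟪f p.1 - p.2, I p⟫)
        = Set.indicator S (fun p => ⟪f p.1 - p.2, φ⟫) := by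
      funext p
      by_cases hp : p.1 ∈ E
      · have hpS : p ∈ S := hp
        rw [Set.indicator_of_mem hpS]
        simp only [hI, Set.indicator_of_mem hp]
      · have hpS : p ∉ S := hp
        rw [Set.indicator_of_notMem hpS]
        simp only [hI, Set.indicator_of_notMem hp, inner_zero_right]
    have e2 : (fun p : X × EuclideanSpace ℝ (Fin d) => ‖I p‖ ^ 2)
        = Set.indicator S (fun _ => ‖φ‖ ^ 2) := by
      funext p
      by_cases hp : p.1 ∈ E
      · have hpS : p ∈ S := hp
        rw [Set.indicator_of_mem hpS]
        simp only [hI, Set.indicator_of_mem hp]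
      · have hpS : p ∉ S := hp
        rw [Set.indicator_of_notMem hpS]
        simp only [hI, Set.indicator_of_notMem hp, norm_zero]
        norm_num
    have i1 : ∫ p, ⟪f p.1 - p.2, I p⟫ ∂𝒟 = -(m⁻¹ * ‖v‖ ^ 2) := by
      rw [e1, integral_indicator hSm]
      have : ∀ p : X × EuclideanSpace ℝ (Fin d), ⟪f p.1 - p.2, φ⟫ = -⟪φ, g p⟫ := by
        intro p
        rw [real_inner_comm]
        have : f p.1 - p.2 = -(g p) := by simp [hg]
        rw [this, inner_neg_right]
      simp_rw [this]
      rw [integral_neg, integral_inner hg_intS, ← hv, hφ, real_inner_smul_left,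
        real_inner_self_eq_norm_sq]
    have i2 : ∫ p, ‖I p‖ ^ 2 ∂𝒟 = m * ‖φ‖ ^ 2 := by
      rw [e2, integral_indicator_const _ hSm]
      simp [hm, mul_comm, Measure.real]
    rw [hD]
    rw [integral_add (hinner_int.const_mul 2) hIsq_int, integral_const_mul, i1, i2, hφ,
      norm_smul, Real.norm_eq_abs, abs_of_pos (inv_pos.mpr hpos), mul_pow]
    field_simp
    ring
  linarith [hIB, hDint_eq]

set_option maxHeartbeats 1000000 in
/-- Guaranteed Brier improvement from a large disagreement event.  If
the disagreement event `E = E^α_{ℓ,a₁,a₂}(f₁,f₂)` has mass at least `η`, then for one of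
the predictors `f_i`, patching it on `E` by the conditional mean residual
`φ_i = E[y - f_i(x) | E]` (projected back to the cube) decreases its Brier score by at
least `α²η/(4d)`. -/
theorem brier_improvement_from_large_disagreement
    {X : Type*} [MeasurableSpace X] {d K : ℕ} (hd : 0 < d)
    (𝒟 : Measure (X × EuclideanSpace ℝ (Fin d))) [IsProbabilityMeasure 𝒟]
    (hY : ∀ᵐ p ∂𝒟, ∀ j, p.2 j ∈ Set.Icc (0 : ℝ) 1)
    (f₁ f₂ : X → EuclideanSpace ℝ (Fin d))
    (hf₁_meas : Measurable f₁) (hf₂_meas : Measurable f₂)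
    (hf₁_range : ∀ x j, f₁ x j ∈ Set.Icc (0 : ℝ) 1)
    (hf₂_range : ∀ x j, f₂ x j ∈ Set.Icc (0 : ℝ) 1)
    (ℓ : Fin K → EuclideanSpace ℝ (Fin d)) (hℓ : ∀ a j, ℓ a j ∈ Set.Icc (0 : ℝ) 1)
    (π₁ π₂ : X → Fin K) (hπ₁_meas : Measurable π₁) (hπ₂_meas : Measurable π₂)
    (hπ₁ : ∀ x a, ⟪f₁ x, ℓ (π₁ x)⟫ ≤ ⟪f₁ x, ℓ a⟫)
    (hπ₂ : ∀ x a, ⟪f₂ x, ℓ (π₂ x)⟫ ≤ ⟪f₂ x, ℓ a⟫)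
    (a₁ a₂ : Fin K) (hne : a₁ ≠ a₂) (α η : ℝ) (hα : 0 < α) (hη : 0 < η)
    (E : Set X)
    (hE : E = {x | π₁ x = a₁ ∧ π₂ x = a₂ ∧
      (α < ⟪f₁ x, ℓ a₂ - ℓ a₁⟫ ∨ α < ⟪f₂ x, ℓ a₁ - ℓ a₂⟫)})
    (hμE : ENNReal.ofReal η ≤ (𝒟.map Prod.fst) E)
    (φ₁ φ₂ : EuclideanSpace ℝ (Fin d))
    (hφ₁ : φ₁ = ((𝒟.map Prod.fst) E).toReal⁻¹ •
      ∫ p in Prod.fst ⁻¹' E, (p.2 - f₁ p.1) ∂𝒟)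
    (hφ₂ : φ₂ = ((𝒟.map Prod.fst) E).toReal⁻¹ •
      ∫ p in Prod.fst ⁻¹' E, (p.2 - f₂ p.1) ∂𝒟)
    (f₁' f₂' : X → EuclideanSpace ℝ (Fin d))
    (hf₁' : ∀ x, f₁' x = projCube (f₁ x + Set.indicator E (fun _ => φ₁) x))
    (hf₂' : ∀ x, f₂' x = projCube (f₂ x + Set.indicator E (fun _ => φ₂) x)) :
    (∫ p, ‖f₁ p.1 - p.2‖ ^ 2 ∂𝒟) - (∫ p, ‖f₁' p.1 - p.2‖ ^ 2 ∂𝒟)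
        ≥ α ^ 2 * η / (4 * d)
    ∨ (∫ p, ‖f₂ p.1 - p.2‖ ^ 2 ∂𝒟) - (∫ p, ‖f₂' p.1 - p.2‖ ^ 2 ∂𝒟)
        ≥ α ^ 2 * η / (4 * d) := by
  classical
  -- measurability of E
  have hEm : MeasurableSet E := by
    rw [hE]
    have h1 : MeasurableSet {x | π₁ x = a₁} := hπ₁_meas (measurableSet_singleton a₁)
    have h2 : MeasurableSet {x | π₂ x = a₂} := hπ₂_meas (measurableSet_singleton a₂)
    have hm1 : Measurable fun x => ⟪f₁ x, ℓ a₂ - ℓ a₁⟫ := hf₁_meas.inner measurable_const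
    have hm2 : Measurable fun x => ⟪f₂ x, ℓ a₁ - ℓ a₂⟫ := hf₂_meas.inner measurable_const
    have h3 : MeasurableSet {x | α < ⟪f₁ x, ℓ a₂ - ℓ a₁⟫} :=
      measurableSet_lt measurable_const hm1
    have h4 : MeasurableSet {x | α < ⟪f₂ x, ℓ a₁ - ℓ a₂⟫} :=
      measurableSet_lt measurable_const hm2
    exact h1.inter (h2.inter (h3.union h4))
  set S : Set (X × EuclideanSpace ℝ (Fin d)) := Prod.fst ⁻¹' E with hS
  have hSm : MeasurableSet S := measurable_fst hEm
  have hmap : (𝒟.map Prod.fst) E = 𝒟 S := Measure.map_apply measurable_fst hEm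
  set m : ℝ := (𝒟 S).toReal with hm
  have hm_top : 𝒟 S ≠ ⊤ := measure_ne_top _ _
  have hηm : η ≤ m := by
    rw [hmap] at hμE
    exact (ENNReal.ofReal_le_iff_le_toReal hm_top).mp hμE
  have hpos : 0 < m := lt_of_lt_of_le hη hηm
  -- residual integrands
  set g₁ : X × EuclideanSpace ℝ (Fin d) → EuclideanSpace ℝ (Fin d) :=
    fun p => p.2 - f₁ p.1 with hg₁
  set g₂ : X × EuclideanSpace ℝ (Fin d) → EuclideanSpace ℝ (Fin d) :=
    fun p => p.2 - f₂ p.1 with hg₂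
  have hg₁_meas : Measurable g₁ := measurable_snd.sub (hf₁_meas.comp measurable_fst)
  have hg₂_meas : Measurable g₂ := measurable_snd.sub (hf₂_meas.comp measurable_fst)
  have hg₁_int : Integrable g₁ 𝒟 := by
    apply Integrable.mono' (integrable_const (Real.sqrt d)) hg₁_meas.aestronglyMeasurable
    filter_upwards [hY] with p hp
    exact euc_sub_norm_le_sqrt _ _ hp (hf₁_range p.1)
  have hg₂_int : Integrable g₂ 𝒟 := by
    apply Integrable.mono' (integrable_const (Real.sqrt d)) hg₂_meas.aestronglyMeasurable
    filter_upwards [hY] with p hp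
    exact euc_sub_norm_le_sqrt _ _ hp (hf₂_range p.1)
  set v₁ : EuclideanSpace ℝ (Fin d) := ∫ p in S, g₁ p ∂𝒟 with hv₁
  set v₂ : EuclideanSpace ℝ (Fin d) := ∫ p in S, g₂ p ∂𝒟 with hv₂
  have hφ₁' : φ₁ = m⁻¹ • v₁ := by rw [hφ₁, hmap]
  have hφ₂' : φ₂ = m⁻¹ • v₂ := by rw [hφ₂, hmap]
  have himp₁ := brier_improve 𝒟 hY f₁ hf₁_meas hf₁_range E hEm hpos v₁ hv₁ φ₁ hφ₁' f₁' hf₁'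
  have himp₂ := brier_improve 𝒟 hY f₂ hf₂_meas hf₂_range E hEm hpos v₂ hv₂ φ₂ hφ₂' f₂' hf₂'
  rw [← hS, ← hm] at himp₁ himp₂
  clear_value v₁ v₂ m S
  -- pointwise inequality on E
  have hpt : ∀ x ∈ E, α < ⟪f₁ x - f₂ x, ℓ a₂ - ℓ a₁⟫ := by
    intro x hx
    rw [hE] at hx
    obtain ⟨hx1, hx2, hx3⟩ := hx
    have hb1 : ⟪f₁ x, ℓ a₁⟫ ≤ ⟪f₁ x, ℓ a₂⟫ := by
      have := hπ₁ x a₂; rwa [hx1] at this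
    have hb2 : ⟪f₂ x, ℓ a₂⟫ ≤ ⟪f₂ x, ℓ a₁⟫ := by
      have := hπ₂ x a₁; rwa [hx2] at this
    simp only [inner_sub_left, inner_sub_right]
    rcases hx3 with h | h
    · simp only [inner_sub_right] at h; linarith
    · simp only [inner_sub_right] at h; linarith
  -- key: α * m ≤ ⟪v₂ - v₁, w⟫
  have hdiff : v₂ - v₁ = ∫ p in S, (f₁ p.1 - f₂ p.1) ∂𝒟 := by
    rw [hv₂, hv₁, ← integral_sub hg₂_int.integrableOn hg₁_int.integrableOn]
    congr 1
    funext p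
    simp only [hg₁, hg₂]
    abel
  have hfd_int : IntegrableOn (fun p : X × EuclideanSpace ℝ (Fin d) => f₁ p.1 - f₂ p.1) S 𝒟 := by
    apply Integrable.integrableOn
    apply Integrable.mono' (integrable_const (Real.sqrt d))
      (((hf₁_meas.comp measurable_fst).sub (hf₂_meas.comp measurable_fst)).aestronglyMeasurable)
    filter_upwards with p
    exact euc_sub_norm_le_sqrt _ _ (hf₁_range p.1) (hf₂_range p.1)
  have hkey : α * m ≤ ⟪v₂ - v₁, ℓ a₂ - ℓ a₁⟫ := by
    rw [hdiff, real_inner_comm, ← integral_inner hfd_int (ℓ a₂ - ℓ a₁)]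
    have : α * m = ∫ _ in S, α ∂𝒟 := by
      rw [setIntegral_const]; simp [hm, mul_comm, Measure.real]
    rw [this]
    apply setIntegral_mono_on (integrable_const α).integrableOn _ hSm
    · intro p hp
      rw [hS] at hp
      have := hpt p.1 hp
      rw [real_inner_comm] at this
      exact this.le
    · apply Integrable.integrableOn
      apply Integrable.mono' (integrable_const (Real.sqrt d * ‖ℓ a₂ - ℓ a₁‖))
        ((measurable_const.inner
          ((hf₁_meas.comp measurable_fst).sub (hf₂_meas.comp measurable_fst))).aestronglyMeasurable)
      filter_upwards with p
      rw [Real.norm_eq_abs]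
      calc |⟪ℓ a₂ - ℓ a₁, f₁ p.1 - f₂ p.1⟫| ≤ ‖ℓ a₂ - ℓ a₁‖ * ‖f₁ p.1 - f₂ p.1‖ :=
            abs_real_inner_le_norm _ _
        _ ≤ ‖ℓ a₂ - ℓ a₁‖ * Real.sqrt d := by
            exact mul_le_mul_of_nonneg_left
              (euc_sub_norm_le_sqrt _ _ (hf₁_range p.1) (hf₂_range p.1)) (norm_nonneg _)
        _ = Real.sqrt d * ‖ℓ a₂ - ℓ a₁‖ := mul_comm _ _
  have hw_norm : ‖ℓ a₂ - ℓ a₁‖ ≤ Real.sqrt d := euc_sub_norm_le_sqrt _ _ (hℓ a₂) (hℓ a₁)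
  set sd : ℝ := Real.sqrt d with hsd_def
  have hsd : 0 < sd := Real.sqrt_pos.mpr (by exact_mod_cast hd)
  have hsd2 : sd ^ 2 = (d : ℝ) := Real.sq_sqrt (Nat.cast_nonneg d)
  clear_value sd
  have hchain : α * m ≤ (‖v₁‖ + ‖v₂‖) * sd := by
    calc α * m ≤ ⟪v₂ - v₁, ℓ a₂ - ℓ a₁⟫ := hkey
      _ ≤ ‖v₂ - v₁‖ * ‖ℓ a₂ - ℓ a₁‖ := real_inner_le_norm _ _
      _ ≤ (‖v₁‖ + ‖v₂‖) * sd := by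
          apply mul_le_mul _ hw_norm (norm_nonneg _) (by positivity)
          calc ‖v₂ - v₁‖ ≤ ‖v₂‖ + ‖v₁‖ := norm_sub_le _ _
            _ = ‖v₁‖ + ‖v₂‖ := add_comm _ _
  have hd' : (0 : ℝ) < d := by exact_mod_cast hd
  rcases le_total ‖v₁‖ ‖v₂‖ with hcase | hcase
  · right
    have himp := himp₂
    have h2 : α * m ≤ 2 * ‖v₂‖ * sd := by
      calc α * m ≤ (‖v₁‖ + ‖v₂‖) * sd := hchain
        _ ≤ 2 * ‖v₂‖ * sd := by
            apply mul_le_mul_of_nonneg_right (by linarith) hsd.le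
    have hsq : α ^ 2 * m ^ 2 ≤ 4 * ‖v₂‖ ^ 2 * (d : ℝ) := by
      have := mul_self_le_mul_self (by positivity) h2
      nlinarith [hsd2]
    have hfin : α ^ 2 * η / (4 * d) ≤ ‖v₂‖ ^ 2 / m := by
      rw [div_le_div_iff₀ (by linarith) hpos]
      nlinarith [hsq, hηm, mul_nonneg (mul_nonneg hα.le hα.le) hpos.le]
    linarith [himp, hfin]
  · left
    have himp := himp₁
    have h2 : α * m ≤ 2 * ‖v₁‖ * sd := by
      calc α * m ≤ (‖v₁‖ + ‖v₂‖) * sd := hchain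
        _ ≤ 2 * ‖v₁‖ * sd := by
            apply mul_le_mul_of_nonneg_right (by linarith) hsd.le
    have hsq : α ^ 2 * m ^ 2 ≤ 4 * ‖v₁‖ ^ 2 * (d : ℝ) := by
      have := mul_self_le_mul_self (by positivity) h2
      nlinarith [hsd2]
    have hfin : α ^ 2 * η / (4 * d) ≤ ‖v₁‖ ^ 2 / m := by
      rw [div_le_div_iff₀ (by linarith) hpos]
      nlinarith [hsq, hηm, mul_nonneg (mul_nonneg hα.le hα.le) hpos.le]
    linarith [himp, hfin]
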